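/- Let f be an accessible homeomorphism of a metric space M, let A, B : M → GL(V) generate cocycles equipped with stable and unstable holonomies H^A and H^B, and let C₁ and C₂ be conjugacies between A and B that both intertwine H^A and H^B. If C₁(x₀) = C₂(x₀) for some point x₀ ∈ M, then C₁(x) = C₂(x) for all x ∈ M. -/
import Mathlib

open Filter Topology

/-- The cocycle generated by `A : M → GL(V)` over `f`: `A⁰_x = Id` and
`Aⁿ_x = A(f^{n−1}x) ∘ ⋯ ∘ A(fx) ∘ A(x)`. -/
noncomputable def coc {M : Type*} {V : Type*} [NormedAddCommGroup V] [NormedSpace ℝ V]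
    (f : M → M) (A : M → (V →L[ℝ] V)ˣ) : ℕ → M → (V →L[ℝ] V)ˣ
  | 0, _ => 1
  | n + 1, x => coc f A n (f x) * A x

/-- The stable set `Wˢ(x) = {y : dist(fⁿx, fⁿy) → 0}`. -/
def stableSet {M : Type*} [MetricSpace M] (f : M → M) (x : M) : Set M :=
  {y | Tendsto (fun n : ℕ => dist (f^[n] x) (f^[n] y)) atTop (𝓝 0)}

/-- The unstable set `Wᵘ(x) = {y : dist(f⁻ⁿx, f⁻ⁿy) → 0}`. -/
def unstableSet {M : Type*} [MetricSpace M] (f : M ≃ₜ M) (x : M) : Set M :=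
  {y | Tendsto (fun n : ℕ => dist ((⇑f.symm)^[n] x) ((⇑f.symm)^[n] y)) atTop (𝓝 0)}

/-- A stable holonomy for the cocycle generated by `A`: a family `H x y ∈ GL(V)`
(relevant for `y ∈ Wˢ(x)`) with `H x x = Id`, `H y z ∘ H x y = H x z`, and
`H x y = (Aⁿ_y)⁻¹ ∘ H (fⁿx) (fⁿy) ∘ Aⁿ_x` for all `n`. -/
def IsStableHolonomy {M : Type*} [MetricSpace M] {V : Type*} [NormedAddCommGroup V]
    [NormedSpace ℝ V] (f : M → M) (A : M → (V →L[ℝ] V)ˣ)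
    (H : M → M → (V →L[ℝ] V)ˣ) : Prop :=
  (∀ x, H x x = 1) ∧
  (∀ x y z, y ∈ stableSet f x → z ∈ stableSet f y → H y z * H x y = H x z) ∧
  (∀ x y, y ∈ stableSet f x → ∀ n : ℕ,
    H x y = (coc f A n y)⁻¹ * H (f^[n] x) (f^[n] y) * coc f A n x)

/-- An unstable holonomy for the cocycle generated by `A`: a family `H x y ∈ GL(V)`
(relevant for `y ∈ Wᵘ(x)`) with `H x x = Id`, `H y z ∘ H x y = H x z`, and
`H x y = (A⁻ⁿ_y)⁻¹ ∘ H (f⁻ⁿx) (f⁻ⁿy) ∘ A⁻ⁿ_x` for all `n`, where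
`A⁻ⁿ_x = (Aⁿ_{f⁻ⁿx})⁻¹`. -/
def IsUnstableHolonomy {M : Type*} [MetricSpace M] {V : Type*} [NormedAddCommGroup V]
    [NormedSpace ℝ V] (f : M ≃ₜ M) (A : M → (V →L[ℝ] V)ˣ)
    (H : M → M → (V →L[ℝ] V)ˣ) : Prop :=
  (∀ x, H x x = 1) ∧
  (∀ x y z, y ∈ unstableSet f x → z ∈ unstableSet f y → H y z * H x y = H x z) ∧
  (∀ x y, y ∈ unstableSet f x → ∀ n : ℕ,
    H x y = coc (⇑f) A n ((⇑f.symm)^[n] y) * H ((⇑f.symm)^[n] x) ((⇑f.symm)^[n] y) *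
      (coc (⇑f) A n ((⇑f.symm)^[n] x))⁻¹)

/-- An `su`-path starting at `x` is encoded by a list of labelled steps: step
`(true, y)` goes to `y ∈ Wˢ` of the current point, step `(false, y)` goes to
`y ∈ Wᵘ` of the current point. `suChain f x p` says the list `p` is a valid
`su`-path starting at `x`. -/
def suChain {M : Type*} [MetricSpace M] (f : M ≃ₜ M) : M → List (Bool × M) → Prop
  | _, [] => True
  | x, (b, y) :: p => (if b then y ∈ stableSet (⇑f) x else y ∈ unstableSet f x) ∧ suChain f y p

/-- The endpoint of an `su`-path starting at `x` encoded by the list `p`. -/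
def chainEnd {M : Type*} : M → List (Bool × M) → M
  | x, [] => x
  | _, (_, y) :: p => chainEnd y p

/-- The weight `H^P = H_{x_{k−1},x_k} ∘ ⋯ ∘ H_{x₀,x₁}` of an `su`-path with respect to a
pair `(Hs, Hu)` of a stable and an unstable holonomy. -/
noncomputable def chainWeight {M : Type*} {V : Type*} [NormedAddCommGroup V]
    [NormedSpace ℝ V] (Hs Hu : M → M → (V →L[ℝ] V)ˣ) :
    M → List (Bool × M) → (V →L[ℝ] V)ˣ
  | _, [] => 1
  | x, (b, y) :: p => chainWeight Hs Hu y p * (if b then Hs x y else Hu x y)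

/-- If `f` is accessible and `C₁`, `C₂` are conjugacies between cocycles `A` and `B`
both of which intertwine the holonomies `H^A` and `H^B`, and `C₁(x₀) = C₂(x₀)` at
some point `x₀`, then `C₁ = C₂` everywhere. -/
theorem stmt_9 {V : Type*} [NormedAddCommGroup V] [NormedSpace ℝ V] [CompleteSpace V]
    {M : Type*} [MetricSpace M] (f : M ≃ₜ M) (A B : M → (V →L[ℝ] V)ˣ)
    (HAs HAu HBs HBu : M → M → (V →L[ℝ] V)ˣ)
    (hHAs : IsStableHolonomy (⇑f) A HAs) (hHAu : IsUnstableHolonomy f A HAu)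
    (hHBs : IsStableHolonomy (⇑f) B HBs) (hHBu : IsUnstableHolonomy f B HBu)
    (hacc : ∀ x y : M, ∃ p : List (Bool × M), suChain f x p ∧ chainEnd x p = y)
    (C₁ C₂ : M → (V →L[ℝ] V)ˣ)
    (hC₁ : ∀ z : M, A z = C₁ (f z) * B z * (C₁ z)⁻¹)
    (hC₂ : ∀ z : M, A z = C₂ (f z) * B z * (C₂ z)⁻¹)
    (hIs₁ : ∀ x y : M, y ∈ stableSet (⇑f) x → HAs x y = C₁ y * HBs x y * (C₁ x)⁻¹)
    (hIu₁ : ∀ x y : M, y ∈ unstableSet f x → HAu x y = C₁ y * HBu x y * (C₁ x)⁻¹)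
    (hIs₂ : ∀ x y : M, y ∈ stableSet (⇑f) x → HAs x y = C₂ y * HBs x y * (C₂ x)⁻¹)
    (hIu₂ : ∀ x y : M, y ∈ unstableSet f x → HAu x y = C₂ y * HBu x y * (C₂ x)⁻¹)
    (x₀ : M) (h₀ : C₁ x₀ = C₂ x₀) :
    ∀ x : M, C₁ x = C₂ x := by
  have step : ∀ (p : List (Bool × M)) (x : M), suChain f x p → C₁ x = C₂ x →
      C₁ (chainEnd x p) = C₂ (chainEnd x p) := by
    intro p
    induction p with
    | nil => intro x _ h; exact h
    | cons hd tl ih =>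
      obtain ⟨b, y⟩ := hd
      intro x hchain hx
      obtain ⟨hstep, htl⟩ := hchain
      refine ih y htl ?_
      cases b with
      | true =>
        have h1 := hIs₁ x y hstep
        have h2 := hIs₂ x y hstep
        have : C₁ y * HBs x y * (C₁ x)⁻¹ = C₂ y * HBs x y * (C₂ x)⁻¹ := h1 ▸ h2
        rw [hx] at this
        exact mul_right_cancel (mul_right_cancel (by rw [this]))
      | false =>

        have h1 := hIu₁ x y hstep
        have h2 := hIu₂ x y hstep
        have : C₁ y * HBu x y * (C₁ x)⁻¹ = C₂ y * HBu x y * (C₂ x)⁻¹ := h1 ▸ h2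
        rw [hx] at this
        exact mul_right_cancel (mul_right_cancel (by rw [this]))
  intro x
  obtain ⟨p, hp, hend⟩ := hacc x₀ x
  have := step p x₀ hp h₀
  rwa [hend] at this
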